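/- Let d ≥ 1 and N ≥ 1. For every x = (x₀,…,x_N) ∈ (ℝ^d)^{N+1}, the function (v₀,…,v_N) ↦ Σ_{i=0}^{N−1} c(x_i, x_{i+1}, v_i, v_{i+1}) has a unique minimizer 𝕍(x) ∈ (ℝ^d)^{N+1}, and the map x ↦ 𝕍(x) is linear, i.e., 𝕍(a·x + b·y) = a·𝕍(x) + b·𝕍(y) for all a, b ∈ ℝ and x, y ∈ (ℝ^d)^{N+1}. -/

import Mathlib

open MeasureTheory

noncomputable section

/-- The cost `c(x, x', v, v') = 12‖x'−x−v‖² − 12⟨x'−x−v, v'−v⟩ + 4‖v'−v‖²`. -/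
def splineCost {d : ℕ} (x x' v v' : EuclideanSpace ℝ (Fin d)) : ℝ :=
  12 * ‖x' - x - v‖ ^ 2 - 12 * (inner ℝ (x' - x - v) (v' - v) : ℝ) + 4 * ‖v' - v‖ ^ 2

open Filter Finset

namespace Stmt4Aux

variable {d N : ℕ}

def cC (x x' v v' h h' : EuclideanSpace ℝ (Fin d)) : ℝ :=
  splineCost x x' (v + h) (v' + h') - splineCost x x' v v' - splineCost 0 0 h h'

lemma sc00 (h h' : EuclideanSpace ℝ (Fin d)) :
    splineCost 0 0 h h' = 2 * ‖h‖ ^ 2 + 2 * ‖h'‖ ^ 2 + 2 * ‖h + h'‖ ^ 2 := by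
  simp only [splineCost, ← real_inner_self_eq_norm_sq]
  simp only [inner_sub_left, inner_sub_right, inner_add_left, inner_add_right,
    inner_zero_left, inner_zero_right, real_inner_comm]
  ring

lemma sc00_smul (t : ℝ) (h h' : EuclideanSpace ℝ (Fin d)) :
    splineCost 0 0 (t • h) (t • h') = t ^ 2 * splineCost 0 0 h h' := by
  simp only [splineCost, ← real_inner_self_eq_norm_sq]
  simp only [inner_sub_left, inner_sub_right, inner_add_left, inner_add_right,
    real_inner_smul_left, real_inner_smul_right,
    inner_zero_left, inner_zero_right, real_inner_comm]
  ring

lemma cC_smul (x x' v v' h h' : EuclideanSpace ℝ (Fin d)) (t : ℝ) :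
    cC x x' v v' (t • h) (t • h') = t * cC x x' v v' h h' := by
  simp only [cC, splineCost, ← real_inner_self_eq_norm_sq]
  simp only [inner_sub_left, inner_sub_right, inner_add_left, inner_add_right,
    real_inner_smul_left, real_inner_smul_right,
    inner_zero_left, inner_zero_right, real_inner_comm]
  ring

lemma cC_add (x x' v v' h h' k k' : EuclideanSpace ℝ (Fin d)) :
    cC x x' v v' (h + k) (h' + k') = cC x x' v v' h h' + cC x x' v v' k k' := by
  simp only [cC, splineCost, ← real_inner_self_eq_norm_sq]
  simp only [inner_sub_left, inner_sub_right, inner_add_left, inner_add_right,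
    inner_zero_left, inner_zero_right, real_inner_comm]
  ring

lemma cC_lin (a b : ℝ) (x x' v v' y y' w w' h h' : EuclideanSpace ℝ (Fin d)) :
    cC (a • x + b • y) (a • x' + b • y') (a • v + b • w) (a • v' + b • w') h h'
      = a * cC x x' v v' h h' + b * cC y y' w w' h h' := by
  simp only [cC, splineCost, ← real_inner_self_eq_norm_sq]
  simp only [inner_sub_left, inner_sub_right, inner_add_left, inner_add_right,
    real_inner_smul_left, real_inner_smul_right,
    inner_zero_left, inner_zero_right, real_inner_comm]
  ring

def F (x v : Fin (N + 1) → EuclideanSpace ℝ (Fin d)) : ℝ :=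
  ∑ i : Fin N, splineCost (x i.castSucc) (x i.succ) (v i.castSucc) (v i.succ)

def Qf (h : Fin (N + 1) → EuclideanSpace ℝ (Fin d)) : ℝ :=
  ∑ i : Fin N, splineCost 0 0 (h i.castSucc) (h i.succ)

def Cr (x v h : Fin (N + 1) → EuclideanSpace ℝ (Fin d)) : ℝ :=
  ∑ i : Fin N, cC (x i.castSucc) (x i.succ) (v i.castSucc) (v i.succ) (h i.castSucc) (h i.succ)

lemma F_expand (x v h : Fin (N + 1) → EuclideanSpace ℝ (Fin d)) :
    F x (v + h) = F x v + Cr x v h + Qf h := by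
  simp only [F, Cr, Qf, cC, Pi.add_apply, ← Finset.sum_add_distrib]
  exact Finset.sum_congr rfl fun i _ => by ring

lemma Cr_smul (x v h : Fin (N + 1) → EuclideanSpace ℝ (Fin d)) (t : ℝ) :
    Cr x v (t • h) = t * Cr x v h := by
  simp only [Cr, Pi.smul_apply, cC_smul, Finset.mul_sum]

lemma Cr_add (x v h k : Fin (N + 1) → EuclideanSpace ℝ (Fin d)) :
    Cr x v (h + k) = Cr x v h + Cr x v k := by
  simp only [Cr, Pi.add_apply, cC_add, Finset.sum_add_distrib]

lemma Qf_smul (t : ℝ) (h : Fin (N + 1) → EuclideanSpace ℝ (Fin d)) :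
    Qf (t • h) = t ^ 2 * Qf h := by
  simp only [Qf, Pi.smul_apply, sc00_smul, Finset.mul_sum]

lemma Cr_lin (a b : ℝ) (x v y w h : Fin (N + 1) → EuclideanSpace ℝ (Fin d)) :
    Cr (a • x + b • y) (a • v + b • w) h = a * Cr x v h + b * Cr y w h := by
  simp only [Cr, Pi.add_apply, Pi.smul_apply, cC_lin, Finset.mul_sum, Finset.sum_add_distrib]

lemma Qf_ge (hN : 1 ≤ N) (h : Fin (N + 1) → EuclideanSpace ℝ (Fin d)) :
    2 * ∑ j : Fin (N + 1), ‖h j‖ ^ 2 ≤ Qf h := by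
  have step1 : ∑ i : Fin N, (2 * ‖h i.castSucc‖ ^ 2 + 2 * ‖h i.succ‖ ^ 2) ≤ Qf h := by
    rw [Qf]
    refine Finset.sum_le_sum fun i _ => ?_
    rw [sc00]
    nlinarith [sq_nonneg ‖h i.castSucc + h i.succ‖]
  have e1 : ∑ j : Fin (N + 1), ‖h j‖ ^ 2
      = (∑ i : Fin N, ‖h i.castSucc‖ ^ 2) + ‖h (Fin.last N)‖ ^ 2 :=
    Fin.sum_univ_castSucc _
  have e2 : ∑ j : Fin (N + 1), ‖h j‖ ^ 2
      = ‖h 0‖ ^ 2 + ∑ i : Fin N, ‖h i.succ‖ ^ 2 :=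
    Fin.sum_univ_succ _
  have h0l : (0 : Fin (N + 1)) ≠ Fin.last N := by
    intro heq
    have := congrArg Fin.val heq
    simp [Fin.last] at this
    omega
  have step3 : ‖h 0‖ ^ 2 + ‖h (Fin.last N)‖ ^ 2 ≤ ∑ j : Fin (N + 1), ‖h j‖ ^ 2 := by
    have := Finset.sum_le_sum_of_subset_of_nonneg
      (s := ({0, Fin.last N} : Finset (Fin (N + 1)))) (t := Finset.univ)
      (f := fun j => ‖h j‖ ^ 2) (Finset.subset_univ _)
      (fun j _ _ => sq_nonneg _)
    rwa [Finset.sum_pair h0l] at this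
  have esum : ∑ i : Fin N, (2 * ‖h i.castSucc‖ ^ 2 + 2 * ‖h i.succ‖ ^ 2)
      = 2 * (∑ i : Fin N, ‖h i.castSucc‖ ^ 2) + 2 * (∑ i : Fin N, ‖h i.succ‖ ^ 2) := by
    rw [Finset.sum_add_distrib, Finset.mul_sum, Finset.mul_sum]
  linarith

lemma Qf_nonneg (hN : 1 ≤ N) (h : Fin (N + 1) → EuclideanSpace ℝ (Fin d)) : 0 ≤ Qf h := by
  have := Qf_ge hN h
  have : (0:ℝ) ≤ ∑ j : Fin (N + 1), ‖h j‖ ^ 2 := Finset.sum_nonneg fun j _ => sq_nonneg _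
  linarith [Qf_ge hN h]

lemma eq_zero_of_Qf_nonpos (hN : 1 ≤ N) (h : Fin (N + 1) → EuclideanSpace ℝ (Fin d))
    (hq : Qf h ≤ 0) : h = 0 := by
  have h1 := Qf_ge hN h
  have h2 : ∑ j : Fin (N + 1), ‖h j‖ ^ 2 ≤ 0 := by linarith
  funext j
  have h3 : ‖h j‖ ^ 2 ≤ 0 := by
    have h4 := Finset.single_le_sum (f := fun j => ‖h j‖ ^ 2) (fun j _ => sq_nonneg _)
      (Finset.mem_univ j)
    linarith
  have : ‖h j‖ = 0 := by nlinarith [norm_nonneg (h j)]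
  simpa using norm_eq_zero.mp this

lemma norm_sq_le (v : Fin (N + 1) → EuclideanSpace ℝ (Fin d)) :
    ‖v‖ ^ 2 ≤ ∑ j : Fin (N + 1), ‖v j‖ ^ 2 := by
  obtain ⟨j, -, hj⟩ := Finset.exists_mem_eq_sup (Finset.univ : Finset (Fin (N + 1)))
    Finset.univ_nonempty (fun i => ‖v i‖₊)
  have hnorm : ‖v‖ = ‖v j‖ := by
    rw [Pi.norm_def, hj, coe_nnnorm]
  rw [hnorm]
  exact Finset.single_le_sum (f := fun j => ‖v j‖ ^ 2) (fun j _ => sq_nonneg _)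
    (Finset.mem_univ j)

lemma F_cont (x : Fin (N + 1) → EuclideanSpace ℝ (Fin d)) : Continuous (F x) := by
  unfold F splineCost
  apply continuous_finset_sum
  intro i _
  have h1 : Continuous fun a : Fin (N+1) → EuclideanSpace ℝ (Fin d) => a i.castSucc :=
    continuous_apply _
  have h2 : Continuous fun a : Fin (N+1) → EuclideanSpace ℝ (Fin d) => a i.succ :=
    continuous_apply _
  have h3 : Continuous fun a : Fin (N+1) → EuclideanSpace ℝ (Fin d) =>
      x i.succ - x i.castSucc - a i.castSucc := by continuity
  have h4 : Continuous fun a : Fin (N+1) → EuclideanSpace ℝ (Fin d) =>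
      a i.succ - a i.castSucc := h2.sub h1
  exact ((continuous_const.mul (h3.norm.pow 2)).sub
    (continuous_const.mul (h3.inner h4))).add (continuous_const.mul (h4.norm.pow 2))


lemma Cr_bound (x v : Fin (N + 1) → EuclideanSpace ℝ (Fin d)) :
    ∃ C : ℝ, ∀ h, |Cr x v h| ≤ C * ‖h‖ := by
  let L : (Fin (N + 1) → EuclideanSpace ℝ (Fin d)) →ₗ[ℝ] ℝ :=
    { toFun := fun h => Cr x v h
      map_add' := fun h k => Cr_add x v h k
      map_smul' := fun t h => by simpa using Cr_smul x v h t }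
  let L' := LinearMap.toContinuousLinearMap L
  refine ⟨‖L'‖, fun h => ?_⟩
  have := L'.le_opNorm h
  simpa [L', L, Real.norm_eq_abs] using this

lemma exists_min (hN : 1 ≤ N) (x : Fin (N + 1) → EuclideanSpace ℝ (Fin d)) :
    ∃ m, ∀ v, F x m ≤ F x v := by
  obtain ⟨C, hC⟩ := Cr_bound x 0
  have hkey : ∀ v, 2 * ‖v‖ ^ 2 - C * ‖v‖ + F x 0 ≤ F x v := by
    intro v
    have e : F x v = F x 0 + Cr x 0 v + Qf v := by
      have := F_expand x 0 v
      rwa [zero_add] at this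
    have h1 : -(C * ‖v‖) ≤ Cr x 0 v := by
      have := hC v
      have := neg_abs_le (Cr x 0 v)
      linarith [abs_nonneg (Cr x 0 v), (abs_le.mp (hC v)).1]
    have h2 : 2 * ‖v‖ ^ 2 ≤ Qf v := by
      have := Qf_ge hN v
      have := norm_sq_le v
      linarith
    linarith
  have hlim : Tendsto (F x) (cocompact _) atTop := by
    have hg : Tendsto (fun t : ℝ => 2 * t ^ 2 - C * t + F x 0) atTop atTop := by
      apply tendsto_atTop_mono' atTop _ tendsto_id
      filter_upwards [eventually_ge_atTop (1 + |C| + |F x 0|)] with t ht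
      have h1 : C ≤ |C| := le_abs_self C
      have h2 : -|F x 0| ≤ F x 0 := neg_abs_le _
      have h3 : (0:ℝ) ≤ |C| := abs_nonneg _
      have h4 : (0:ℝ) ≤ |F x 0| := abs_nonneg _
      simp only [id]
      nlinarith
    have hn : Tendsto (fun v : Fin (N + 1) → EuclideanSpace ℝ (Fin d) => ‖v‖)
        (cocompact _) atTop := tendsto_norm_cocompact_atTop
    exact tendsto_atTop_mono hkey (hg.comp hn)
  exact (F_cont x).exists_forall_le hlim

lemma first_order (hN : 1 ≤ N) (x w : Fin (N + 1) → EuclideanSpace ℝ (Fin d))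
    (hw : ∀ v, F x w ≤ F x v) (h : Fin (N + 1) → EuclideanSpace ℝ (Fin d)) :
    Cr x w h = 0 := by
  set c := Cr x w h with hc
  set q := Qf h with hqdef
  have hq : 0 ≤ q := Qf_nonneg hN h
  have key : ∀ t : ℝ, 0 ≤ t * c + t ^ 2 * q := by
    intro t
    have := hw (w + t • h)
    rw [F_expand x w (t • h), Cr_smul, Qf_smul] at this
    linarith
  by_contra hc0
  have hq1 : 0 < q + 1 := by linarith
  have h1 := key (-c / (q + 1))
  have e : (-c / (q + 1)) * c + (-c / (q + 1)) ^ 2 * q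
      = -(c ^ 2) / (q + 1) ^ 2 := by
    field_simp
    ring
  rw [e] at h1
  have hpos : (0:ℝ) < (q + 1) ^ 2 := by positivity
  have h2 : (0:ℝ) * (q + 1) ^ 2 ≤ -c ^ 2 := by
    rwa [← le_div_iff₀ hpos]
  have h3 : c ^ 2 = 0 := by nlinarith [sq_nonneg c]
  exact hc0 (by nlinarith [sq_nonneg c])

lemma min_unique (hN : 1 ≤ N) (x w u : Fin (N + 1) → EuclideanSpace ℝ (Fin d))
    (hw : ∀ v, F x w ≤ F x v) (hu : ∀ v, F x u ≤ F x v) : w = u := by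
  have e : F x u = F x w + Cr x w (u - w) + Qf (u - w) := by
    have := F_expand x w (u - w)
    rwa [add_sub_cancel] at this
  rw [first_order hN x w hw (u - w)] at e
  have h1 : F x u ≤ F x w := hu w
  have h2 : Qf (u - w) ≤ 0 := by linarith
  have := eq_zero_of_Qf_nonpos hN (u - w) h2
  have := sub_eq_zero.mp this
  exact this.symm

end Stmt4Aux

/-- For each `x`, the function `v ↦ Σ_{i=0}^{N−1} c(x_i, x_{i+1}, v_i, v_{i+1})` has a
unique minimizer `𝕍(x)`, and the map `x ↦ 𝕍(x)` is linear. -/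
theorem stmt4 (d N : ℕ) (hd : 1 ≤ d) (hN : 1 ≤ N) :
    ∃ V : (Fin (N + 1) → EuclideanSpace ℝ (Fin d)) →
        (Fin (N + 1) → EuclideanSpace ℝ (Fin d)),
      (∀ x : Fin (N + 1) → EuclideanSpace ℝ (Fin d),
        (∀ w : Fin (N + 1) → EuclideanSpace ℝ (Fin d),
          (∑ i : Fin N, splineCost (x i.castSucc) (x i.succ) (V x i.castSucc) (V x i.succ)) ≤
          ∑ i : Fin N, splineCost (x i.castSucc) (x i.succ) (w i.castSucc) (w i.succ)) ∧
        (∀ w : Fin (N + 1) → EuclideanSpace ℝ (Fin d),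
          (∀ u : Fin (N + 1) → EuclideanSpace ℝ (Fin d),
            (∑ i : Fin N, splineCost (x i.castSucc) (x i.succ) (w i.castSucc) (w i.succ)) ≤
            ∑ i : Fin N, splineCost (x i.castSucc) (x i.succ) (u i.castSucc) (u i.succ)) →
          w = V x)) ∧
      (∀ (a b : ℝ) (x y : Fin (N + 1) → EuclideanSpace ℝ (Fin d)),
        V (a • x + b • y) = a • V x + b • V y) := by
  classical
  open Stmt4Aux in
  refine ⟨fun x => Classical.choose (exists_min hN x), ?_, ?_⟩
  · intro x
    have hmin : ∀ v, F x (Classical.choose (exists_min hN x)) ≤ F x v :=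
      Classical.choose_spec (exists_min hN x)
    exact ⟨hmin, fun w hw => min_unique hN x w _ hw hmin⟩
  · intro a b x y
    show Classical.choose (exists_min hN (a • x + b • y))
      = a • Classical.choose (exists_min hN x) + b • Classical.choose (exists_min hN y)
    set z := a • x + b • y with hz
    set u := a • Classical.choose (exists_min hN x) + b • Classical.choose (exists_min hN y)
      with hu
    have hX : ∀ v, F x (Classical.choose (exists_min hN x)) ≤ F x v :=
      Classical.choose_spec (exists_min hN x)
    have hY : ∀ v, F y (Classical.choose (exists_min hN y)) ≤ F y v :=
      Classical.choose_spec (exists_min hN y)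
    have humin : ∀ v, F z u ≤ F z v := by
      intro v
      have e : F z v = F z u + Cr z u (v - u) + Qf (v - u) := by
        have := F_expand z u (v - u)
        rwa [add_sub_cancel] at this
      have hcr : Cr z u (v - u) = 0 := by
        rw [hz, hu, Cr_lin, first_order hN x _ hX, first_order hN y _ hY]
        ring
      have := Qf_nonneg hN (v - u)
      rw [e, hcr]
      linarith
    exact min_unique hN z (Classical.choose (exists_min hN z)) u
      (Classical.choose_spec (exists_min hN z)) humin
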